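/- Let f : D → C be a rigid symmetric monoidal functor and x an object of C. If x is dualizable with dual x^∨, then the internal Hom functor Hom(x,−) : C → D, right adjoint to d ↦ f(d) ⊗ x, is computed by Hom(x,y) ≃ f^R(x^∨ ⊗ y); in particular it preserves colimits and is D-linear. -/

import Mathlib

/-!
STATEMENT 4: Let `f : D → C` be a rigid symmetric monoidal functor (in particular `f` has a
`D`-linear right adjoint `f^R`) and `x ∈ C`.  If `x` is dualizable with dual `x^∨`, the
internal Hom functor `Hom(x, −) : C ⥤ D` — the right adjoint of `d ↦ f d ⊗ x` — is
computed by `Hom(x, y) ≃ f^R (x^∨ ⊗ y)`; in particular it preserves colimits and is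
`D`-linear (being a composite of such functors).
-/

open CategoryTheory MonoidalCategory

noncomputable section

theorem rigid_internal_hom_of_dualizable
    {D C : Type*} [Category D] [Category C]
    [MonoidalCategory D] [MonoidalCategory C] [SymmetricCategory C]
    (f : D ⥤ C) [f.Monoidal]
    (fR : C ⥤ D) (adjf : f ⊣ fR)
    (x xd : C) [ExactPairing x xd]
    (H : C ⥤ D) (adjH : (f ⋙ tensorRight x) ⊣ H) :
    Nonempty (H ≅ tensorLeft xd ⋙ fR) := by
  have adj' : (f ⋙ tensorRight x) ⊣ (tensorRight xd ⋙ fR) :=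
    adjf.comp (tensorRightAdjunction x xd)
  have e1 : H ≅ tensorRight xd ⋙ fR := adjH.rightAdjointUniq adj'
  have e2 : tensorRight xd ≅ tensorLeft xd :=
    NatIso.ofComponents (fun y => β_ y xd)
      (by intro y z g; simp)
  exact ⟨e1 ≪≫ Functor.isoWhiskerRight e2 fR⟩
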